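/- If the sequence (f₁,…,fₙ) of pairwise commuting homogeneous positive-degree endomorphisms of the ℕ-graded ℂ-vector space M is regular, then M is a free module over the polynomial ring ℂ[z₁,…,zₙ], where zᵢ acts as fᵢ. -/

import Mathlib

universe v

section gproj
variable {M : Type v} [AddCommGroup M] [Module ℂ M] (ℳ : ℕ → Submodule ℂ M)

/-- Projection onto the degree-`d` component of an internal grading. -/
noncomputable def gproj (hgr : DirectSum.IsInternal ℳ) (d : ℕ) : M →ₗ[ℂ] M :=
  (ℳ d).subtype ∘ₗ (DFinsupp.lapply d : (DirectSum ℕ fun e => ℳ e) →ₗ[ℂ] ℳ d) ∘ₗ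
    (LinearEquiv.ofBijective (DirectSum.coeLinearMap ℳ) hgr).symm.toLinearMap

lemma gproj_of_mem {hgr : DirectSum.IsInternal ℳ} {d e : ℕ} {m : M} (hm : m ∈ ℳ e) :
    gproj ℳ hgr d m = if e = d then m else 0 := by
  have h1 : (LinearEquiv.ofBijective (DirectSum.coeLinearMap ℳ) hgr).symm m
      = DirectSum.of (fun e => ℳ e) e ⟨m, hm⟩ := by
    rw [LinearEquiv.symm_apply_eq]
    show m = DirectSum.coeLinearMap ℳ (DirectSum.of (fun e => ℳ e) e ⟨m, hm⟩)
    rw [DirectSum.coeLinearMap_of]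
  rw [gproj]
  simp only [LinearMap.coe_comp, Function.comp_apply, LinearEquiv.coe_coe, h1]
  rcases eq_or_ne e d with rfl | hne
  · simp [DFinsupp.lapply_apply, DirectSum.of_eq_same]
  · simp only [DFinsupp.lapply_apply, if_neg hne]
    rw [DirectSum.of_eq_of_ne _ _ _ hne.symm]
    rfl

lemma gproj_of_mem_same {hgr : DirectSum.IsInternal ℳ} {d : ℕ} {m : M} (hm : m ∈ ℳ d) :
    gproj ℳ hgr d m = m := by rw [gproj_of_mem ℳ hm, if_pos rfl]

lemma gproj_of_mem_ne {hgr : DirectSum.IsInternal ℳ} {d e : ℕ} {m : M} (hne : e ≠ d)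
    (hm : m ∈ ℳ e) : gproj ℳ hgr d m = 0 := by rw [gproj_of_mem ℳ hm, if_neg hne]

lemma gproj_eq_zero_of_mem_iSup_ne {hgr : DirectSum.IsInternal ℳ} {d : ℕ} {x : M}
    (hx : x ∈ ⨆ e : ℕ, ⨆ _ : e ≠ d, ℳ e) : gproj ℳ hgr d x = 0 := by
  have : (⨆ e : ℕ, ⨆ _ : e ≠ d, ℳ e) ≤ LinearMap.ker (gproj ℳ hgr d) := by
    refine iSup_le fun e => iSup_le fun hne => fun m hm => ?_
    exact LinearMap.mem_ker.2 (gproj_of_mem_ne ℳ hne hm)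
  simpa using this hx

lemma gproj_mem_span {hgr : DirectSum.IsInternal ℳ} {d : ℕ} {S : Set M}
    (hS : ∀ s ∈ S, ∃ e, s ∈ ℳ e) {x : M} (hx : x ∈ Submodule.span ℂ S) :
    gproj ℳ hgr d x ∈ Submodule.span ℂ S := by
  have : Submodule.span ℂ S ≤ (Submodule.span ℂ S).comap (gproj ℳ hgr d) := by
    rw [Submodule.span_le]
    intro s hs
    obtain ⟨e, he⟩ := hS s hs
    rw [SetLike.mem_coe, Submodule.mem_comap, gproj_of_mem ℳ he]
    split
    · exact Submodule.subset_span hs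
    · exact Submodule.zero_mem _
  exact this hx

end gproj

/-- The composite operator `f₁^{a₁} ∘ ⋯ ∘ fₙ^{aₙ}`, the action of the monomial
`z₁^{a₁}⋯zₙ^{aₙ}` when `zᵢ` acts as `fᵢ`. -/
noncomputable def monOp {M : Type v} [AddCommGroup M] [Module ℂ M] {n : ℕ}
    (f : Fin n → M →ₗ[ℂ] M) (a : Fin n → ℕ) : M →ₗ[ℂ] M :=
  (List.ofFn fun i => (f i) ^ (a i)).prod

section monOpLemmas
variable {M : Type v} [AddCommGroup M] [Module ℂ M]
variable {N : Type v} [AddCommGroup N] [Module ℂ N]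

lemma monOp_zero (f : Fin 0 → M →ₗ[ℂ] M) (a : Fin 0 → ℕ) : monOp f a = 1 := by
  simp [monOp, List.ofFn_zero]

lemma monOp_succ {n : ℕ} (f : Fin (n + 1) → M →ₗ[ℂ] M) (a : Fin (n + 1) → ℕ) :
    monOp f a = (f 0) ^ (a 0) * monOp (fun i => f i.succ) (fun i => a i.succ) := by
  rw [monOp, List.ofFn_succ, List.prod_cons, monOp]

lemma pow_comm_lmap (π : M →ₗ[ℂ] N) (g : M →ₗ[ℂ] M) (g' : N →ₗ[ℂ] N)
    (h : π ∘ₗ g = g' ∘ₗ π) (k : ℕ) : π ∘ₗ (g ^ k) = (g' ^ k) ∘ₗ π := by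
  induction k with
  | zero => ext x; rfl
  | succ k ih =>
    rw [pow_succ, pow_succ]
    calc π ∘ₗ (g ^ k * g) = (π ∘ₗ g ^ k) ∘ₗ g := rfl
    _ = (g' ^ k) ∘ₗ (π ∘ₗ g) := by rw [ih, LinearMap.comp_assoc]
    _ = (g' ^ k * g') ∘ₗ π := by rw [h, ← LinearMap.comp_assoc]; rfl

lemma monOp_comm_lmap {n : ℕ} (π : M →ₗ[ℂ] N) (g : Fin n → M →ₗ[ℂ] M)
    (g' : Fin n → N →ₗ[ℂ] N) (h : ∀ i, π ∘ₗ g i = g' i ∘ₗ π) (a : Fin n → ℕ) :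
    π ∘ₗ monOp g a = monOp g' a ∘ₗ π := by
  induction n with
  | zero => rw [monOp_zero, monOp_zero]; rfl
  | succ n ih =>
    rw [monOp_succ, monOp_succ]
    have h1 := pow_comm_lmap π (g 0) (g' 0) (h 0) (a 0)
    have h2 := ih (fun i => g i.succ) (fun i => g' i.succ) (fun i => h i.succ)
      (fun i => a i.succ)
    calc π ∘ₗ ((g 0)^(a 0) * monOp (fun i => g i.succ) (fun i => a i.succ))
        = (π ∘ₗ (g 0)^(a 0)) ∘ₗ monOp (fun i => g i.succ) (fun i => a i.succ) := rfl
    _ = ((g' 0)^(a 0)) ∘ₗ (π ∘ₗ monOp (fun i => g i.succ) (fun i => a i.succ)) := by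
        rw [h1, LinearMap.comp_assoc]
    _ = _ := by rw [h2, ← LinearMap.comp_assoc]; rfl

lemma monOp_homog {n : ℕ} (ℳ : ℕ → Submodule ℂ M) (f : Fin n → M →ₗ[ℂ] M)
    (hf : ∀ i m, (∃ e, m ∈ ℳ e) → ∃ e', f i m ∈ ℳ e') (a : Fin n → ℕ) (m : M)
    (hm : ∃ e, m ∈ ℳ e) : ∃ e', monOp f a m ∈ ℳ e' := by
  induction n with
  | zero => rw [monOp_zero]; exact hm
  | succ n ih =>
    rw [monOp_succ]
    have h1 : ∃ e', monOp (fun i => f i.succ) (fun i => a i.succ) m ∈ ℳ e' :=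
      ih (fun i => f i.succ) (fun i m => hf i.succ m) (fun i => a i.succ)
    rw [Module.End.mul_apply]
    set y := monOp (fun i => f i.succ) (fun i => a i.succ) m with hy
    clear_value y
    induction (a 0) with
    | zero => simpa using h1
    | succ k ihk =>
      rw [pow_succ', Module.End.mul_apply]
      exact hf 0 _ ihk

lemma linearIndependent_pow_family {κ : Type*} (f₀ : M →ₗ[ℂ] M)
    (hinj : Function.Injective f₀) (π : M →ₗ[ℂ] N) (hker : ∀ x, π (f₀ x) = 0)
    (u : κ → M) (hu : LinearIndependent ℂ (fun q => π (u q))) :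
    LinearIndependent ℂ (fun p : ℕ × κ => (f₀ ^ p.1) (u p.2)) := by
  classical
  have key : ∀ (s : Finset (ℕ × κ)) (g : ℕ × κ → ℂ),
      (∑ p ∈ s, g p • (f₀ ^ p.1) (u p.2)) = 0 → ∀ q : κ, (0, q) ∈ s → g (0, q) = 0 := by
    intro s g hsum q hq
    have h0 : ∑ p ∈ s, g p • π ((f₀ ^ p.1) (u p.2)) = 0 := by
      have := congrArg π hsum
      simpa [map_sum] using this
    rw [← Finset.sum_filter_add_sum_filter_not s (fun p => p.1 = 0)] at h0
    have h1 : ∑ p ∈ s.filter (fun p => ¬ p.1 = 0), g p • π ((f₀ ^ p.1) (u p.2)) = 0 := by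
      refine Finset.sum_eq_zero fun p hp => ?_
      obtain ⟨k, hk⟩ := Nat.exists_eq_succ_of_ne_zero (Finset.mem_filter.1 hp).2
      rw [hk, pow_succ', Module.End.mul_apply, hker, smul_zero]
    rw [h1, add_zero] at h0
    set s₀ := s.filter (fun p => p.1 = 0) with hs₀
    have hinj0 : Set.InjOn Prod.snd (s₀ : Set (ℕ × κ)) := by
      intro x hx y hy hxy
      have hx1 : x.1 = 0 := (Finset.mem_filter.1 hx).2
      have hy1 : y.1 = 0 := (Finset.mem_filter.1 hy).2
      exact Prod.ext (hx1.trans hy1.symm) hxy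
    have h2 : ∑ q' ∈ s₀.image Prod.snd, g (0, q') • π (u q') = 0 := by
      rw [Finset.sum_image (fun x hx y hy => hinj0 hx hy)]
      rw [← h0]
      refine Finset.sum_congr rfl fun p hp => ?_
      have hp1 : p.1 = 0 := (Finset.mem_filter.1 hp).2
      have hpe : p = (0, p.2) := Prod.ext hp1 rfl
      rw [← hpe, hp1, pow_zero, Module.End.one_apply]
    have := linearIndependent_iff'.1 hu (s₀.image Prod.snd) (fun q' => g (0, q')) h2 q
    refine this ?_
    exact Finset.mem_image.2 ⟨(0, q), Finset.mem_filter.2 ⟨hq, rfl⟩, rfl⟩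
  have main : ∀ (Nb : ℕ) (s : Finset (ℕ × κ)) (g : ℕ × κ → ℂ),
      (∀ p ∈ s, p.1 ≤ Nb) → (∑ p ∈ s, g p • (f₀ ^ p.1) (u p.2)) = 0 →
      ∀ p ∈ s, g p = 0 := by
    intro Nb
    induction Nb with
    | zero =>
      intro s g hb hsum p hp
      have hp1 : p.1 = 0 := Nat.le_zero.1 (hb p hp)
      have hpe : p = (0, p.2) := Prod.ext hp1 rfl
      rw [hpe]
      exact key s g hsum p.2 (hpe ▸ hp)
    | succ Nb ih =>
      intro s g hb hsum p hp
      have h0 : ∀ q, (0, q) ∈ s → g (0, q) = 0 := key s g hsum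
      set s1 := s.filter (fun p => ¬ p.1 = 0) with hs1
      have hsum1 : ∑ p ∈ s1, g p • (f₀ ^ p.1) (u p.2) = 0 := by
        rw [← Finset.sum_filter_add_sum_filter_not s (fun p => ¬ p.1 = 0)] at hsum
        have hz0 : ∑ p ∈ s.filter (fun p => ¬ ¬ p.1 = 0), g p • (f₀ ^ p.1) (u p.2) = 0 := by
          refine Finset.sum_eq_zero fun p hp' => ?_
          have hp1 : p.1 = 0 := not_not.1 (Finset.mem_filter.1 hp').2
          have hpe : p = (0, p.2) := Prod.ext hp1 rfl
          have : g p = 0 := by rw [hpe]; exact h0 p.2 (hpe ▸ (Finset.mem_filter.1 hp').1)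
          rw [this, zero_smul]
        rw [hz0, add_zero] at hsum
        exact hsum
      have hsum2 : f₀ (∑ p ∈ s1, g p • (f₀ ^ (p.1 - 1)) (u p.2)) = 0 := by
        rw [map_sum, ← hsum1]
        refine Finset.sum_congr rfl fun p hp' => ?_
        have hp1 : p.1 ≠ 0 := (Finset.mem_filter.1 hp').2
        obtain ⟨k, hk⟩ := Nat.exists_eq_succ_of_ne_zero hp1
        rw [map_smul, hk]
        simp only [Nat.succ_sub_one]
        rw [pow_succ', Module.End.mul_apply]
      have hz : ∑ p ∈ s1, g p • (f₀ ^ (p.1 - 1)) (u p.2) = 0 := by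
        apply hinj
        rw [hsum2, map_zero]
      have hinj2 : Set.InjOn (fun p : ℕ × κ => (p.1 - 1, p.2)) (s1 : Set (ℕ × κ)) := by
        intro x hx y hy hxy
        have hx1 : x.1 ≠ 0 := (Finset.mem_filter.1 hx).2
        have hy1 : y.1 ≠ 0 := (Finset.mem_filter.1 hy).2
        have hxy' : x.1 - 1 = y.1 - 1 ∧ x.2 = y.2 := by
          simpa [Prod.mk.injEq] using hxy
        refine Prod.ext ?_ hxy'.2
        omega
      set t := s1.image (fun p => (p.1 - 1, p.2)) with ht
      have hsum3 : ∑ p ∈ t, g (p.1 + 1, p.2) • (f₀ ^ p.1) (u p.2) = 0 := by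
        rw [ht, Finset.sum_image (fun x hx y hy => hinj2 hx hy), ← hz]
        refine Finset.sum_congr rfl fun p hp' => ?_
        have hp1 : p.1 ≠ 0 := (Finset.mem_filter.1 hp').2
        have : p.1 - 1 + 1 = p.1 := by omega
        rw [this]
      have hb3 : ∀ p ∈ t, p.1 ≤ Nb := by
        intro p hp'
        rw [ht] at hp'
        obtain ⟨p', hp's, rfl⟩ := Finset.mem_image.1 hp'
        have := hb p' (Finset.mem_filter.1 hp's).1
        have hp1 : p'.1 ≠ 0 := (Finset.mem_filter.1 hp's).2
        omega
      have hall := ih t (fun p => g (p.1 + 1, p.2)) hb3 hsum3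
      by_cases hp1 : p.1 = 0
      · have hpe : p = (0, p.2) := Prod.ext hp1 rfl
        rw [hpe]; exact h0 p.2 (hpe ▸ hp)
      · have hps1 : p ∈ s1 := Finset.mem_filter.2 ⟨hp, hp1⟩
        have hpt : (p.1 - 1, p.2) ∈ t := Finset.mem_image.2 ⟨p, hps1, rfl⟩
        have := hall (p.1 - 1, p.2) hpt
        simp only at this
        have hpp : p.1 - 1 + 1 = p.1 := by omega
        rw [hpp] at this
        exact this
  rw [linearIndependent_iff']
  intro s g hsum p hp
  exact main (s.sup Prod.fst) s g (fun q hq => Finset.le_sup (f := Prod.fst) hq) hsum p hp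

lemma submodule_eq_top_of_quot (ℳ : ℕ → Submodule ℂ M) (hgr : DirectSum.IsInternal ℳ)
    (Nsub : Submodule ℂ M)
    (hNst : ∀ d : ℕ, ∀ x ∈ Nsub, gproj ℳ hgr d x ∈ Nsub)
    (f₀ : M →ₗ[ℂ] M) (d₀ : ℕ) (hd₀ : 1 ≤ d₀)
    (hf₀ : ∀ e : ℕ, ∀ m ∈ ℳ e, f₀ m ∈ ℳ (e + d₀))
    (hfN : ∀ x ∈ Nsub, f₀ x ∈ Nsub)
    (hsup : Nsub ⊔ LinearMap.range f₀ = ⊤) : Nsub = ⊤ := by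
  have hfNk : ∀ (k : ℕ), ∀ x ∈ Nsub, (f₀ ^ k) x ∈ Nsub := by
    intro k
    induction k with
    | zero => intro x hx; simpa using hx
    | succ k ih =>
      intro x hx
      rw [pow_succ, Module.End.mul_apply]
      exact ih _ (hfN x hx)
  have hfk : ∀ (k e : ℕ), ∀ m ∈ ℳ e, (f₀ ^ k) m ∈ ℳ (e + k * d₀) := by
    intro k
    induction k with
    | zero => intro e m hm; simpa using hm
    | succ k ih =>
      intro e m hm
      rw [pow_succ', Module.End.mul_apply]
      have := hf₀ _ _ (ih e m hm)
      have harith : e + k * d₀ + d₀ = e + (k + 1) * d₀ := by ring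
      rwa [harith] at this
  rw [eq_top_iff, ← hgr.submodule_iSup_eq_top]
  refine iSup_le fun d => fun m hm => ?_
  have hsplit : ∀ k : ℕ, ∃ x ∈ Nsub, m - x ∈ LinearMap.range (f₀ ^ k) := by
    intro k
    induction k with
    | zero => exact ⟨0, Nsub.zero_mem, ⟨m - 0, by simp⟩⟩
    | succ k ih =>
      obtain ⟨x, hx, w, hw⟩ := ih
      have hw' : w ∈ Nsub ⊔ LinearMap.range f₀ := hsup ▸ Submodule.mem_top
      obtain ⟨y, hy, z', hz', hyz⟩ := Submodule.mem_sup.1 hw'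
      obtain ⟨z, rfl⟩ := hz'
      refine ⟨x + (f₀ ^ k) y, Nsub.add_mem hx (hfNk k y hy), ⟨z, ?_⟩⟩
      have h3 : m - x = (f₀ ^ k) y + (f₀ ^ k) (f₀ z) := by
        rw [← map_add, hyz, hw]
      rw [pow_succ, Module.End.mul_apply, sub_add_eq_sub_sub, h3, add_sub_cancel_left]
  obtain ⟨x, hx, hrx⟩ := hsplit (d + 1)
  have hker : ∀ w ∈ LinearMap.range (f₀ ^ (d + 1)), gproj ℳ hgr d w = 0 := by
    intro w hw
    obtain ⟨w', rfl⟩ := hw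
    have hP : (⊤ : Submodule ℂ M) ≤ LinearMap.ker (gproj ℳ hgr d ∘ₗ (f₀ ^ (d + 1))) := by
      rw [← hgr.submodule_iSup_eq_top]
      refine iSup_le fun e => fun y hy => ?_
      have h1 : (f₀ ^ (d + 1)) y ∈ ℳ (e + (d + 1) * d₀) := hfk (d + 1) e y hy
      have hne : e + (d + 1) * d₀ ≠ d := by
        have : d + 1 ≤ (d + 1) * d₀ := Nat.le_mul_of_pos_right _ hd₀
        omega
      exact LinearMap.mem_ker.2 (gproj_of_mem_ne ℳ hne h1)
    have := hP (Submodule.mem_top (x := w'))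
    simpa using this
  have h1 : gproj ℳ hgr d (m - x) = 0 := hker _ hrx
  rw [map_sub, sub_eq_zero, gproj_of_mem_same ℳ hm] at h1
  rw [h1]
  exact hNst d x hx

end monOpLemmas

theorem aux_free (n : ℕ) :
    ∀ (M : Type v) [AddCommGroup M] [Module ℂ M] (ℳ : ℕ → Submodule ℂ M)
      (hgr : DirectSum.IsInternal ℳ) (f : Fin n → M →ₗ[ℂ] M)
      (_ : ∀ i j, (f i) ∘ₗ (f j) = (f j) ∘ₗ (f i))
      (_ : ∀ i, ∃ d : ℕ, 1 ≤ d ∧ ∀ e : ℕ, ∀ m ∈ ℳ e, f i m ∈ ℳ (e + d))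
      (_ : ∀ k : Fin n, ∀ m : M,
        f k m ∈ (⨆ i : Fin n, ⨆ _ : i < k, LinearMap.range (f i)) →
        m ∈ (⨆ i : Fin n, ⨆ _ : i < k, LinearMap.range (f i))),
    ∃ (ι : Type v) (v : ι → M), (∀ j, ∃ e, v j ∈ ℳ e) ∧
      LinearIndependent ℂ (fun q : (Fin n → ℕ) × ι => monOp f q.1 (v q.2)) ∧
      Submodule.span ℂ (Set.range fun q : (Fin n → ℕ) × ι => monOp f q.1 (v q.2)) = ⊤ := by
  induction n with
  | zero =>
    intro M _ _ ℳ hgr f hcomm hhomog hreg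
    set b := hgr.collectedBasis (fun d => Module.Basis.ofVectorSpace ℂ (ℳ d)) with hb
    refine ⟨(Σ d : ℕ, Module.Basis.ofVectorSpaceIndex ℂ (ℳ d)), fun j => b j, ?_, ?_, ?_⟩
    · intro j
      exact ⟨j.1, hgr.collectedBasis_mem _ j⟩
    · have hfam : (fun q : (Fin 0 → ℕ) × (Σ d : ℕ, Module.Basis.ofVectorSpaceIndex ℂ (ℳ d)) =>
          monOp f q.1 (b q.2)) = (⇑b) ∘ Prod.snd := by
        funext q
        rw [monOp_zero]
        rfl
      rw [hfam]
      refine b.linearIndependent.comp Prod.snd ?_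
      intro q q' hqq
      exact Prod.ext (Subsingleton.elim _ _) hqq
    · have hfam : (Set.range fun q : (Fin 0 → ℕ) × (Σ d : ℕ, Module.Basis.ofVectorSpaceIndex ℂ (ℳ d)) =>
          monOp f q.1 (b q.2)) = Set.range b := by
        ext x
        constructor
        · rintro ⟨q, rfl⟩; exact ⟨q.2, by simp only [monOp_zero, Module.End.one_apply]⟩
        · rintro ⟨j, rfl⟩; exact ⟨(fun _ => 0, j), by simp only [monOp_zero, Module.End.one_apply]⟩
      rw [hfam, b.span_eq]
  | succ n ih =>
    intro M _ _ ℳ hgr f hcomm hhomog hreg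
    classical
    obtain ⟨d₀, hd₀, hf₀⟩ := hhomog 0
    -- the first map is injective
    have hbot : (⨆ i : Fin (n + 1), ⨆ _ : i < 0, LinearMap.range (f i)) = ⊥ := by
      refine le_antisymm (iSup_le fun i => iSup_le fun h => absurd h (Fin.not_lt_zero i)) bot_le
    have hinj : Function.Injective (f 0) := by
      rw [← LinearMap.ker_eq_bot]
      refine (Submodule.eq_bot_iff _).2 fun m hm => ?_
      have hm' : f 0 m ∈ (⨆ i : Fin (n + 1), ⨆ _ : i < 0, LinearMap.range (f i)) := by
        rw [hbot]
        exact LinearMap.mem_ker.1 hm ▸ Submodule.zero_mem ⊥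
      have := hreg 0 m hm'
      rw [hbot] at this
      simpa using this
    -- the quotient by the range of f 0
    set K := LinearMap.range (f 0) with hK
    set π := K.mkQ with hπ
    have hπ0 : ∀ x : M, π (f 0 x) = 0 := by
      intro x
      rw [hπ, Submodule.mkQ_apply, Submodule.Quotient.mk_eq_zero]
      exact ⟨x, rfl⟩
    have hKstab : ∀ i : Fin n, ∀ x ∈ K, f i.succ x ∈ K := by
      rintro i x ⟨y, rfl⟩
      exact ⟨f i.succ y, congrFun (congrArg DFunLike.coe (hcomm 0 i.succ)) y⟩
    set g : Fin n → (M ⧸ K) →ₗ[ℂ] (M ⧸ K) := fun i => K.mapQ K (f i.succ) (hKstab i) with hg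
    have hcommπ : ∀ i : Fin n, π ∘ₗ f i.succ = g i ∘ₗ π := by
      intro i
      ext x
      simp [hg, hπ, Submodule.mapQ_apply]
    -- K is homogeneous-stable
    have hKspan : K = Submodule.span ℂ ((f 0) '' (⋃ e, (ℳ e : Set M))) := by
      rw [← Submodule.map_span]
      have : Submodule.span ℂ (⋃ e, (ℳ e : Set M)) = ⊤ := by
        rw [Submodule.span_iUnion]
        simp only [Submodule.span_eq]
        exact hgr.submodule_iSup_eq_top
      rw [this, Submodule.map_top, hK]
    have hKgp : ∀ d : ℕ, ∀ x ∈ K, gproj ℳ hgr d x ∈ K := by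
      intro d x hx
      rw [hKspan] at hx ⊢
      refine gproj_mem_span ℳ ?_ hx
      rintro s ⟨m, hm, rfl⟩
      obtain ⟨e, he⟩ := Set.mem_iUnion.1 hm
      exact ⟨e + d₀, hf₀ e m he⟩
    -- quotient grading
    set ℳ' : ℕ → Submodule ℂ (M ⧸ K) := fun d => (ℳ d).map π with hℳ'
    have hgr' : DirectSum.IsInternal ℳ' := by
      rw [DirectSum.isInternal_submodule_iff_iSupIndep_and_iSup_eq_top]
      constructor
      · intro d
        rw [disjoint_iff_inf_le]
        intro x ⟨hx1, hx2⟩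
        obtain ⟨a, ha, rfl⟩ := hx1
        have hqsup : (⨆ e, ⨆ _ : e ≠ d, ℳ' e) = Submodule.map π (⨆ e, ⨆ _ : e ≠ d, ℳ e) := by
          rw [Submodule.map_iSup]
          refine iSup_congr fun e => ?_
          rw [Submodule.map_iSup]
        rw [hqsup] at hx2
        obtain ⟨b, hb, hab⟩ := hx2
        have hsub : a - b ∈ K := by
          rw [← Submodule.Quotient.eq]
          exact hab.symm
        have hgb : gproj ℳ hgr d b = 0 := gproj_eq_zero_of_mem_iSup_ne ℳ hb
        have hga : gproj ℳ hgr d (a - b) = a := by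
          rw [map_sub, hgb, sub_zero, gproj_of_mem_same ℳ ha]
        have : a ∈ K := hga ▸ hKgp d (a - b) hsub
        rw [Submodule.mem_bot, hπ, Submodule.mkQ_apply, Submodule.Quotient.mk_eq_zero]
        exact this
      · rw [hℳ']
        rw [← Submodule.map_iSup, hgr.submodule_iSup_eq_top, Submodule.map_top,
          Submodule.range_mkQ]
    -- hypotheses for the quotient
    have hcomm' : ∀ i j, (g i) ∘ₗ (g j) = (g j) ∘ₗ (g i) := by
      intro i j
      refine Submodule.linearMap_qext _ ?_
      ext x
      have h1 : f i.succ (f j.succ x) = f j.succ (f i.succ x) :=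
        congrFun (congrArg DFunLike.coe (hcomm i.succ j.succ)) x
      simp [hg, Submodule.mapQ_apply, h1]
    have hhomog' : ∀ i, ∃ d : ℕ, 1 ≤ d ∧ ∀ e : ℕ, ∀ m ∈ ℳ' e, g i m ∈ ℳ' (e + d) := by
      intro i
      obtain ⟨d, hd, hfi⟩ := hhomog i.succ
      refine ⟨d, hd, ?_⟩
      rintro e m ⟨m', hm', rfl⟩
      refine ⟨f i.succ m', hfi e m' hm', ?_⟩
      have := congrFun (congrArg DFunLike.coe (hcommπ i)) m'
      exact this.symm
    have hrangeq : ∀ i : Fin n,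
        LinearMap.range (g i) = Submodule.map π (LinearMap.range (f i.succ)) := by
      intro i
      rw [LinearMap.range_eq_map, ← Submodule.range_mkQ K, LinearMap.range_eq_map,
        ← Submodule.map_comp, ← hcommπ i, Submodule.map_comp, ← LinearMap.range_eq_map]
    have hreg' : ∀ k : Fin n, ∀ mq : M ⧸ K,
        g k mq ∈ (⨆ i : Fin n, ⨆ _ : i < k, LinearMap.range (g i)) →
        mq ∈ (⨆ i : Fin n, ⨆ _ : i < k, LinearMap.range (g i)) := by
      intro k mq hmq
      obtain ⟨m, rfl⟩ := Submodule.mkQ_surjective K mq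
      set Sk := ⨆ i : Fin n, ⨆ _ : i < k, LinearMap.range (f i.succ) with hSkdef
      have hSk : (⨆ i : Fin n, ⨆ _ : i < k, LinearMap.range (g i)) = Submodule.map π Sk := by
        rw [hSkdef, Submodule.map_iSup]
        refine iSup_congr fun i => ?_
        rw [Submodule.map_iSup]
        exact iSup_congr fun hik => hrangeq i
      have hfin : (⨆ i : Fin (n + 1), ⨆ _ : i < k.succ, LinearMap.range (f i))
          = K ⊔ Sk := by
        refine le_antisymm (iSup_le fun i => iSup_le fun hik => ?_) (sup_le ?_ ?_)
        · induction i using Fin.cases with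
          | zero => exact le_sup_left
          | succ j =>
            have hjk : j < k := by
              rwa [Fin.succ_lt_succ_iff] at hik
            refine le_trans ?_ le_sup_right
            rw [hSkdef]
            exact le_iSup_of_le j (le_iSup_of_le hjk le_rfl)
        · rw [hK]
          exact le_iSup_of_le 0 (le_iSup_of_le (Fin.succ_pos k) le_rfl)
        · rw [hSkdef]
          refine iSup_le fun j => iSup_le fun hjk => ?_
          exact le_iSup_of_le j.succ (le_iSup_of_le (Fin.succ_lt_succ_iff.2 hjk) le_rfl)
      rw [hSk] at hmq
      have hπm : g k (π m) = π (f k.succ m) :=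
        (congrFun (congrArg DFunLike.coe (hcommπ k)) m).symm
      have hmq2 : π (f k.succ m) ∈ Submodule.map π Sk := by
        rw [← hπm]; exact hmq
      obtain ⟨y, hy, hπy⟩ := hmq2
      have hsub : f k.succ m - y ∈ K := by
        rw [← Submodule.Quotient.eq]
        exact hπy.symm
      have hmem : f k.succ m ∈ K ⊔ Sk := by
        have : f k.succ m = (f k.succ m - y) + y := by abel
        rw [this]
        exact Submodule.add_mem_sup hsub hy
      rw [← hfin] at hmem
      have := hreg k.succ m hmem
      rw [hfin] at this
      obtain ⟨a, ha, b, hb, hab⟩ := Submodule.mem_sup.1 this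
      have hπa : π a = 0 := by
        rw [hπ, Submodule.mkQ_apply, Submodule.Quotient.mk_eq_zero]
        exact ha
      have hfinal : π m = π b := by
        rw [← hab, map_add, hπa, zero_add]
      rw [hSk]
      show π m ∈ Submodule.map π Sk
      rw [hfinal]
      exact Submodule.mem_map_of_mem hb
    -- apply the induction hypothesis
    obtain ⟨ι, vq, hvqhomog, hvqind, hvqspan⟩ := ih (M ⧸ K) ℳ' hgr' g hcomm' hhomog' hreg'
    -- lift the basis
    have hlift : ∀ j : ι, ∃ (w : M) (e : ℕ), w ∈ ℳ e ∧ π w = vq j := by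
      intro j
      obtain ⟨e, he⟩ := hvqhomog j
      obtain ⟨w, hw, hπw⟩ := he
      exact ⟨w, e, hw, hπw⟩
    choose v ve hve hπv using hlift
    set u : (Fin n → ℕ) × ι → M := fun q => monOp (fun i => f i.succ) q.1 (v q.2) with hu
    have hπu : ∀ q, π (u q) = monOp g q.1 (vq q.2) := by
      intro q
      have h1 := congrFun (congrArg DFunLike.coe
        (monOp_comm_lmap π (fun i => f i.succ) g hcommπ q.1)) (v q.2)
      simp only [LinearMap.coe_comp, Function.comp_apply] at h1
      rw [hπv] at h1
      exact h1
    have hmonOp : ∀ (a : Fin (n + 1) → ℕ) (j : ι),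
        monOp f a (v j) = ((f 0) ^ (a 0)) (u (fun i => a i.succ, j)) := by
      intro a j
      rw [monOp_succ, Module.End.mul_apply]
    -- linear independence
    have hind1 : LinearIndependent ℂ
        (fun p : ℕ × ((Fin n → ℕ) × ι) => ((f 0) ^ p.1) (u p.2)) := by
      refine linearIndependent_pow_family (f 0) hinj π hπ0 u ?_
      have : (fun q => π (u q)) = fun q : (Fin n → ℕ) × ι => monOp g q.1 (vq q.2) :=
        funext hπu
      rw [this]
      exact hvqind
    have hind : LinearIndependent ℂ
        (fun q : (Fin (n + 1) → ℕ) × ι => monOp f q.1 (v q.2)) := by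
      have hEinj : Function.Injective
          (fun q : (Fin (n + 1) → ℕ) × ι => ((q.1 0, ((fun i => q.1 i.succ), q.2)) :
            ℕ × ((Fin n → ℕ) × ι))) := by
        intro q q' hqq
        simp only [Prod.mk.injEq] at hqq
        obtain ⟨h1, h2, h3⟩ := hqq
        refine Prod.ext ?_ h3
        funext i
        induction i using Fin.cases with
        | zero => exact h1
        | succ j => exact congrFun h2 j
      have := hind1.comp _ hEinj
      have hfun : ((fun p : ℕ × ((Fin n → ℕ) × ι) => ((f 0) ^ p.1) (u p.2)) ∘
          (fun q : (Fin (n + 1) → ℕ) × ι => (q.1 0, ((fun i => q.1 i.succ), q.2))))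
          = fun q : (Fin (n + 1) → ℕ) × ι => monOp f q.1 (v q.2) := by
        funext q
        simp only [Function.comp_apply]
        rw [hmonOp]
      rwa [hfun] at this
    -- spanning
    set Nsub := Submodule.span ℂ
      (Set.range fun q : (Fin (n + 1) → ℕ) × ι => monOp f q.1 (v q.2)) with hNsub
    have hgen : ∀ s ∈ (Set.range fun q : (Fin (n + 1) → ℕ) × ι => monOp f q.1 (v q.2)),
        ∃ e, s ∈ ℳ e := by
      rintro s ⟨q, rfl⟩
      refine monOp_homog ℳ f ?_ q.1 (v q.2) ⟨ve q.2, hve q.2⟩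
      intro i m hm
      obtain ⟨e, he⟩ := hm
      obtain ⟨d, hd1, hd2⟩ := hhomog i
      exact ⟨e + d, hd2 e m he⟩
    have hNst : ∀ d : ℕ, ∀ x ∈ Nsub, gproj ℳ hgr d x ∈ Nsub := by
      intro d x hx
      exact gproj_mem_span ℳ hgen hx
    have hfNgen : ∀ (a : Fin (n + 1) → ℕ) (j : ι),
        f 0 (monOp f a (v j)) =
          monOp f (Fin.cons (a 0 + 1) (fun i => a i.succ)) (v j) := by
      intro a j
      rw [hmonOp, hmonOp]
      simp only [Fin.cons_zero, Fin.cons_succ]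
      rw [pow_succ', Module.End.mul_apply]
    have hfN : ∀ x ∈ Nsub, f 0 x ∈ Nsub := by
      intro x hx
      have hle : Nsub ≤ Nsub.comap (f 0) := by
        rw [hNsub, Submodule.span_le]
        rintro s ⟨q, rfl⟩
        rw [SetLike.mem_coe, Submodule.mem_comap]
        rw [hfNgen q.1 q.2]
        exact Submodule.subset_span ⟨(Fin.cons (q.1 0 + 1) (fun i => q.1 i.succ), q.2), rfl⟩
      exact hle hx
    have hmapN : Submodule.map π Nsub = ⊤ := by
      rw [eq_top_iff, ← hvqspan, Submodule.span_le]
      rintro s ⟨q, rfl⟩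
      rw [SetLike.mem_coe]
      have heq : (fun i : Fin n => (Fin.cons (0 : ℕ) q.1 : Fin (n + 1) → ℕ) i.succ) = q.1 := by
        funext i
        simp
      have : monOp g q.1 (vq q.2) = π (monOp f (Fin.cons 0 q.1) (v q.2)) := by
        rw [hmonOp, Fin.cons_zero, pow_zero, Module.End.one_apply, heq, hπu (q.1, q.2)]
      show monOp g q.1 (vq q.2) ∈ Submodule.map π Nsub
      rw [this]
      exact Submodule.mem_map_of_mem (Submodule.subset_span ⟨(Fin.cons 0 q.1, q.2), rfl⟩)
    have hsup : Nsub ⊔ K = ⊤ := by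
      rw [Submodule.eq_top_iff']
      intro m
      have : π m ∈ Submodule.map π Nsub := by rw [hmapN]; exact Submodule.mem_top
      obtain ⟨x, hx, hπx⟩ := this
      have hsub : x - m ∈ K := by
        rw [← Submodule.Quotient.eq]
        exact hπx
      have : m = x - (x - m) := by abel
      rw [this]
      exact Submodule.sub_mem_sup hx hsub
    have hNtop : Nsub = ⊤ :=
      submodule_eq_top_of_quot ℳ hgr Nsub hNst (f 0) d₀ hd₀ hf₀ hfN (by rw [hK] at hsup; exact hsup)
    exact ⟨ι, v, fun j => ⟨ve j, hve j⟩, hind, hNtop⟩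

/-- If `(f₁,…,fₙ)` is a regular sequence of pairwise commuting homogeneous
positive-degree endomorphisms of an `ℕ`-graded `ℂ`-vector space `M`, then `M` is free
over `ℂ[z₁,…,zₙ]` (with `zᵢ` acting as `fᵢ`): there are elements `v j` such that the
family of all `f₁^{a₁}⋯fₙ^{aₙ}(v j)` is a `ℂ`-basis of `M`. -/
theorem free_of_regular_sequence
    {M : Type v} [AddCommGroup M] [Module ℂ M]
    (ℳ : ℕ → Submodule ℂ M) (hgr : DirectSum.IsInternal ℳ)
    {n : ℕ} (f : Fin n → M →ₗ[ℂ] M)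
    (hcomm : ∀ i j, (f i) ∘ₗ (f j) = (f j) ∘ₗ (f i))
    (hhomog : ∀ i, ∃ d : ℕ, 1 ≤ d ∧ ∀ e : ℕ, ∀ m ∈ ℳ e, f i m ∈ ℳ (e + d))
    (hreg : ∀ k : Fin n, ∀ m : M,
      f k m ∈ (⨆ i : Fin n, ⨆ _ : i < k, LinearMap.range (f i)) →
      m ∈ (⨆ i : Fin n, ⨆ _ : i < k, LinearMap.range (f i))) :
    ∃ (ι : Type v) (v : ι → M),
      LinearIndependent ℂ (fun q : (Fin n → ℕ) × ι => monOp f q.1 (v q.2)) ∧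
      Submodule.span ℂ (Set.range fun q : (Fin n → ℕ) × ι => monOp f q.1 (v q.2)) = ⊤ := by
  obtain ⟨ι, v, _, hind, hspan⟩ := aux_free n M ℳ hgr f hcomm hhomog hreg
  exact ⟨ι, v, hind, hspan⟩
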